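/- The quotient S' := (WZ)^τ/(T(σ²), σT(σ²)) of the fixed subalgebra (WZ)^τ by the ideal generated by T(σ²) and σ·T(σ²) is a free W-module of rank 2^{d−2} − 1, and S' is generated as a W-algebra by the residue class of σ + σ^{−1}. -/

import Mathlib

set_option synthInstance.maxHeartbeats 1000000
set_option maxHeartbeats 1000000

instance : Fact (Nat.Prime 2) := ⟨Nat.prime_two⟩

/-- The cyclic group `Z = ⟨σ⟩` of order `2^(d-1)`, written multiplicatively. -/
abbrev cyclicZ (d : ℕ) := Multiplicative (ZMod (2 ^ (d - 1)))

/-- The generator `σ` of `Z`, viewed in the group algebra `WZ`. -/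
noncomputable def sigma (k : Type*) [CommRing k] (d : ℕ) :
    MonoidAlgebra (WittVector 2 k) (cyclicZ d) :=
  MonoidAlgebra.of (WittVector 2 k) (cyclicZ d)
    (Multiplicative.ofAdd (1 : ZMod (2 ^ (d - 1))))

/-- The inverse `σ⁻¹` of the generator, viewed in the group algebra `WZ`. -/
noncomputable def sigmaInv (k : Type*) [CommRing k] (d : ℕ) :
    MonoidAlgebra (WittVector 2 k) (cyclicZ d) :=
  MonoidAlgebra.of (WittVector 2 k) (cyclicZ d)
    (Multiplicative.ofAdd (-1 : ZMod (2 ^ (d - 1))))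

/-- The `W`-algebra automorphism `τ` of `WZ` induced by `σ ↦ σ⁻¹`. -/
noncomputable def tauAut (k : Type*) [CommRing k] (d : ℕ) :
    MonoidAlgebra (WittVector 2 k) (cyclicZ d) ≃ₐ[WittVector 2 k]
      MonoidAlgebra (WittVector 2 k) (cyclicZ d) :=
  MonoidAlgebra.domCongr (WittVector 2 k) (WittVector 2 k) (MulEquiv.inv (cyclicZ d))

/-- The fixed subalgebra `(WZ)^τ`. -/
noncomputable def fixedSubalgebra (k : Type*) [CommRing k] (d : ℕ) :
    Subalgebra (WittVector 2 k) (MonoidAlgebra (WittVector 2 k) (cyclicZ d)) :=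
  AlgHom.equalizer (tauAut k d).toAlgHom (AlgHom.id _ _)

/-- `T(σ²) = 1 + σ² + σ⁴ + ⋯ + σ^(2^(d-1) - 2) ∈ WZ`. -/
noncomputable def Tsigma (k : Type*) [CommRing k] (d : ℕ) :
    MonoidAlgebra (WittVector 2 k) (cyclicZ d) :=
  ∑ i ∈ Finset.range (2 ^ (d - 2)), sigma k d ^ (2 * i)

/-- The ideal `(T(σ²), σ·T(σ²))` of `(WZ)^τ`. -/
noncomputable def idealTT (k : Type*) [CommRing k] (d : ℕ) : Ideal (fixedSubalgebra k d) :=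
  Ideal.span {x : fixedSubalgebra k d |
    (x : MonoidAlgebra (WittVector 2 k) (cyclicZ d)) = Tsigma k d ∨
    (x : MonoidAlgebra (WittVector 2 k) (cyclicZ d)) = sigma k d * Tsigma k d}

/-! ### Auxiliary material -/

section Aux16
variable (k : Type*) [CommRing k] (d : ℕ)

/-- `σ^c` as an element of the group algebra, for a natural number `c`. -/
noncomputable def vv (c : ℕ) : MonoidAlgebra (WittVector 2 k) (cyclicZ d) :=
  MonoidAlgebra.of (WittVector 2 k) (cyclicZ d)
    (Multiplicative.ofAdd ((c : ZMod (2 ^ (d - 1)))))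

lemma vv_mul (a b : ℕ) : vv k d a * vv k d b = vv k d (a + b) := by
  unfold vv
  rw [← map_mul]
  push_cast
  rfl

lemma vv_zero : vv k d 0 = 1 := by
  unfold vv; push_cast; exact map_one _

lemma vv_apply (a : ℕ) (i : ZMod (2 ^ (d - 1))) :
    (vv k d a).coeff (Multiplicative.ofAdd i) =
      if (a : ZMod (2 ^ (d - 1))) = i then 1 else 0 := by
  classical
  unfold vv
  rw [MonoidAlgebra.of_apply, MonoidAlgebra.single_apply]
  congr 1

lemma sigma_pow (j : ℕ) : sigma k d ^ j = vv k d j := by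
  unfold sigma vv
  rw [← map_pow]
  congr 1
  rw [← ofAdd_nsmul]
  congr 1
  simp

lemma vv_period (a : ℕ) : vv k d (2 ^ (d - 1) + a) = vv k d a := by
  have h : ((2 ^ (d - 1) + a : ℕ) : ZMod (2 ^ (d - 1))) = ((a : ℕ) : ZMod (2 ^ (d - 1))) := by
    rw [Nat.cast_add, ZMod.natCast_self, zero_add]
  unfold vv
  rw [h]

lemma tauAut_apply (x : MonoidAlgebra (WittVector 2 k) (cyclicZ d)) (i : ZMod (2 ^ (d - 1))) :
    (tauAut k d x).coeff (Multiplicative.ofAdd i) = x.coeff (Multiplicative.ofAdd (-i)) := by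
  unfold tauAut
  rw [MonoidAlgebra.coeff_domCongr]
  rfl

lemma mem_fixed_iff (x : MonoidAlgebra (WittVector 2 k) (cyclicZ d)) :
    x ∈ fixedSubalgebra k d ↔
      ∀ i : ZMod (2 ^ (d - 1)),
        x.coeff (Multiplicative.ofAdd (-i)) = x.coeff (Multiplicative.ofAdd i) := by
  constructor
  · intro hx i
    have h1 : tauAut k d x = x := hx
    conv_rhs => rw [← h1]
    rw [tauAut_apply]
  · intro h
    show tauAut k d x = x
    refine MonoidAlgebra.ext (Finsupp.ext fun g => ?_)
    have hg : g = Multiplicative.ofAdd (Multiplicative.toAdd g) := rfl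
    rw [hg, tauAut_apply]
    exact h _
lemma castinj {a b : ℕ} (ha : a < 2 ^ (d - 1)) (hb : b < 2 ^ (d - 1)) :
    ((a : ZMod (2 ^ (d - 1))) = (b : ZMod (2 ^ (d - 1)))) ↔ a = b := by
  haveI : NeZero (2 ^ (d - 1)) := ⟨pow_ne_zero _ two_ne_zero⟩
  constructor
  · intro h
    have h2 := congrArg ZMod.val h
    rwa [ZMod.val_cast_of_lt ha, ZMod.val_cast_of_lt hb] at h2
  · rintro rfl; rfl

lemma neg_natCast {c : ℕ} (hc : c ≤ 2 ^ (d - 1)) :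
    -((c : ℕ) : ZMod (2 ^ (d - 1))) = ((2 ^ (d - 1) - c : ℕ) : ZMod (2 ^ (d - 1))) := by
  have h : ((2 ^ (d - 1) - c : ℕ) : ZMod (2 ^ (d - 1))) + ((c : ℕ) : ZMod (2 ^ (d - 1))) = 0 := by
    rw [← Nat.cast_add]
    have h2 : 2 ^ (d - 1) - c + c = 2 ^ (d - 1) := by omega
    rw [h2, ZMod.natCast_self]
  exact (eq_neg_of_add_eq_zero_left h).symm

/-- `σ^c + σ^{-c}`. -/
noncomputable def phiA (c : ℕ) : MonoidAlgebra (WittVector 2 k) (cyclicZ d) :=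
  vv k d c + vv k d (2 ^ (d - 1) - c)

/-- The basis family of the fixed algebra: `1`, `σ^c + σ^{-c}` (`1 ≤ c ≤ 2^(d-2)-1`),
`σ^(2^(d-2))`. -/
noncomputable def eA (c : ℕ) : MonoidAlgebra (WittVector 2 k) (cyclicZ d) :=
  if c = 0 ∨ c = 2 ^ (d - 2) then vv k d c else phiA k d c

lemma tauAut_vv {c : ℕ} (hc : c ≤ 2 ^ (d - 1)) :
    tauAut k d (vv k d c) = vv k d (2 ^ (d - 1) - c) := by
  unfold tauAut vv
  rw [MonoidAlgebra.of_apply, MonoidAlgebra.of_apply, MonoidAlgebra.domCongr_single]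
  congr 1
  show (Multiplicative.ofAdd ((c : ℕ) : ZMod (2 ^ (d - 1))))⁻¹ = _
  rw [← ofAdd_neg, neg_natCast d hc]

lemma phiA_mem {c : ℕ} (hc : c ≤ 2 ^ (d - 1)) : phiA k d c ∈ fixedSubalgebra k d := by
  show tauAut k d _ = _
  unfold phiA
  rw [map_add, tauAut_vv k d hc, tauAut_vv k d (Nat.sub_le _ _)]
  have h : 2 ^ (d - 1) - (2 ^ (d - 1) - c) = c := by omega
  rw [h, add_comm]
  rfl

lemma eA_mem (hd : 3 ≤ d) {c : ℕ} (hc : c ≤ 2 ^ (d - 2)) : eA k d c ∈ fixedSubalgebra k d := by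
  have hn : 2 ^ (d - 1) = 2 * 2 ^ (d - 2) := by
    have h2 : d - 1 = (d - 2) + 1 := by omega
    rw [h2, pow_succ, mul_comm]
  unfold eA
  split
  · rename_i h
    show tauAut k d _ = _
    rcases h with rfl | rfl
    · rw [tauAut_vv k d (by omega)]
      have h0 : 2 ^ (d - 1) - 0 = 2 ^ (d - 1) + 0 := by omega
      rw [h0, vv_period]
      rfl
    · rw [tauAut_vv k d (by omega)]
      show vv k d _ = _
      congr 1
      omega
  · exact phiA_mem k d (by omega)
lemma cast_sub_eq_neg_iff {c : ℕ} (hc : c ≤ 2 ^ (d - 1)) (i : ZMod (2 ^ (d - 1))) :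
    (((2 ^ (d - 1) - c : ℕ) : ZMod (2 ^ (d - 1))) = -i) ↔ ((c : ℕ) : ZMod (2 ^ (d - 1))) = i := by
  rw [← neg_natCast d hc, neg_inj]

lemma eA_apply (hd : 3 ≤ d) {c c' : ℕ} (hc : c ≤ 2 ^ (d - 2)) (hc' : c' ≤ 2 ^ (d - 2)) :
    (eA k d c).coeff (Multiplicative.ofAdd ((c' : ℕ) : ZMod (2 ^ (d - 1)))) =
      if c = c' then 1 else 0 := by
  have hn : 2 ^ (d - 1) = 2 * 2 ^ (d - 2) := by
    have h2 : d - 1 = (d - 2) + 1 := by omega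
    rw [h2, pow_succ, mul_comm]
  have hm1 : 2 ≤ 2 ^ (d - 2) := by
    calc 2 = 2 ^ 1 := rfl
    _ ≤ 2 ^ (d - 2) := Nat.pow_le_pow_right (by norm_num) (by omega)
  unfold eA
  split
  · rw [vv_apply]
    exact if_congr (castinj d (by omega) (by omega)) rfl rfl
  · rename_i h
    show (vv k d c + vv k d (2 ^ (d - 1) - c)).coeff _ = _
    rw [MonoidAlgebra.coeff_add, Finsupp.add_apply, vv_apply, vv_apply]
    have h2 : ¬ (((2 ^ (d - 1) - c : ℕ) : ZMod (2 ^ (d - 1))) = ((c' : ℕ) : ZMod (2 ^ (d - 1)))) := by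
      rw [castinj d (by omega) (by omega)]
      omega
    rw [if_neg h2, add_zero]
    exact if_congr (castinj d (by omega) (by omega)) rfl rfl

lemma ext_of_symm (hd : 3 ≤ d) (x y : MonoidAlgebra (WittVector 2 k) (cyclicZ d))
    (hx : x ∈ fixedSubalgebra k d) (hy : y ∈ fixedSubalgebra k d)
    (h : ∀ c : ℕ, c ≤ 2 ^ (d - 2) →
      x.coeff (Multiplicative.ofAdd ((c : ℕ) : ZMod (2 ^ (d - 1)))) =
      y.coeff (Multiplicative.ofAdd ((c : ℕ) : ZMod (2 ^ (d - 1))))) : x = y := by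
  haveI : NeZero (2 ^ (d - 1)) := ⟨pow_ne_zero _ two_ne_zero⟩
  have hn : 2 ^ (d - 1) = 2 * 2 ^ (d - 2) := by
    have h2 : d - 1 = (d - 2) + 1 := by omega
    rw [h2, pow_succ, mul_comm]
  rw [mem_fixed_iff] at hx hy
  refine MonoidAlgebra.ext (Finsupp.ext fun g => ?_)
  set i := Multiplicative.toAdd g with hi
  have hg : g = Multiplicative.ofAdd i := rfl
  have ha : i.val < 2 ^ (d - 1) := ZMod.val_lt i
  have hiv : ((i.val : ℕ) : ZMod (2 ^ (d - 1))) = i := ZMod.natCast_zmod_val i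
  by_cases ham : i.val ≤ 2 ^ (d - 2)
  · rw [hg, ← hiv]
    exact h i.val ham
  · set b : ℕ := 2 ^ (d - 1) - i.val with hb
    have hbm : b ≤ 2 ^ (d - 2) := by omega
    have hbi : ((b : ℕ) : ZMod (2 ^ (d - 1))) = -i :=
      (cast_sub_eq_neg_iff d (le_of_lt ha) i).mpr hiv
    have hneg : -((b : ℕ) : ZMod (2 ^ (d - 1))) = i := by rw [hbi, neg_neg]
    rw [hg, ← hneg, hx, hy]
    exact h b hbm

lemma sum_apply_eq (hd : 3 ≤ d) (w : ℕ → WittVector 2 k) {c' : ℕ} (hc' : c' ≤ 2 ^ (d - 2)) :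
    (∑ c ∈ Finset.range (2 ^ (d - 2) + 1), w c • eA k d c).coeff
      (Multiplicative.ofAdd ((c' : ℕ) : ZMod (2 ^ (d - 1)))) = w c' := by
  classical
  rw [MonoidAlgebra.coeff_sum, Finsupp.finset_sum_apply]
  rw [Finset.sum_eq_single c']
  · rw [MonoidAlgebra.coeff_smul_apply, eA_apply k d hd hc' hc', if_pos rfl, smul_eq_mul, mul_one]
  · intro c hcr hne
    rw [MonoidAlgebra.coeff_smul_apply, eA_apply k d hd (by simp at hcr; omega) hc', if_neg hne,
      smul_eq_mul, mul_zero]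
  · intro hc'r
    exact absurd (Finset.mem_range.mpr (by omega)) hc'r

lemma decomp (hd : 3 ≤ d) (x : MonoidAlgebra (WittVector 2 k) (cyclicZ d))
    (hx : x ∈ fixedSubalgebra k d) :
    x = ∑ c ∈ Finset.range (2 ^ (d - 2) + 1),
        x.coeff (Multiplicative.ofAdd ((c : ℕ) : ZMod (2 ^ (d - 1)))) • eA k d c := by
  refine ext_of_symm k d hd _ _ hx ?_ ?_
  · exact Subalgebra.sum_mem _ fun c hc =>
      Subalgebra.smul_mem _ (eA_mem k d hd (by simp at hc; omega)) _
  · intro c hc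
    rw [sum_apply_eq k d hd _ hc]
lemma sigma_eq : sigma k d = vv k d 1 := by
  rw [← pow_one (sigma k d), sigma_pow]

lemma Tv : Tsigma k d = ∑ t ∈ Finset.range (2 ^ (d - 2)), vv k d (2 * t) := by
  unfold Tsigma
  exact Finset.sum_congr rfl fun t _ => sigma_pow k d _

lemma sTv : sigma k d * Tsigma k d = ∑ t ∈ Finset.range (2 ^ (d - 2)), vv k d (2 * t + 1) := by
  rw [Tv, Finset.mul_sum]
  refine Finset.sum_congr rfl fun t _ => ?_
  rw [sigma_eq, vv_mul]
  congr 1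
  omega

lemma T_apply (hd : 3 ≤ d) (i : ZMod (2 ^ (d - 1))) :
    (Tsigma k d).coeff (Multiplicative.ofAdd i) = if 2 ∣ i.val then 1 else 0 := by
  classical
  haveI : NeZero (2 ^ (d - 1)) := ⟨pow_ne_zero _ two_ne_zero⟩
  have hn : 2 ^ (d - 1) = 2 * 2 ^ (d - 2) := by
    have h2 : d - 1 = (d - 2) + 1 := by omega
    rw [h2, pow_succ, mul_comm]
  have ha : i.val < 2 ^ (d - 1) := ZMod.val_lt i
  have hiv : ((i.val : ℕ) : ZMod (2 ^ (d - 1))) = i := ZMod.natCast_zmod_val i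
  have key : ∀ t : ℕ, t < 2 ^ (d - 2) →
      ((((2 * t : ℕ)) : ZMod (2 ^ (d - 1))) = i ↔ 2 * t = i.val) := by
    intro t ht
    constructor
    · intro h
      have h2 := congrArg ZMod.val h
      rwa [ZMod.val_cast_of_lt (by omega)] at h2
    · intro h
      rw [h]; exact hiv
  rw [Tv, MonoidAlgebra.coeff_sum, Finsupp.finset_sum_apply]
  have hsum : ∀ t ∈ Finset.range (2 ^ (d - 2)),
      (vv k d (2 * t)).coeff (Multiplicative.ofAdd i) = if 2 * t = i.val then 1 else 0 := by
    intro t ht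
    rw [vv_apply]
    exact if_congr (key t (Finset.mem_range.mp ht)) rfl rfl
  rw [Finset.sum_congr rfl hsum]
  by_cases h : 2 ∣ i.val
  · obtain ⟨t0, ht0⟩ := h
    rw [if_pos ⟨t0, ht0⟩, Finset.sum_eq_single t0]
    · rw [if_pos ht0.symm]
    · intro t _ hne
      rw [if_neg (by omega)]
    · intro hc
      exact absurd (Finset.mem_range.mpr (by omega)) hc
  · rw [if_neg h, Finset.sum_eq_zero]
    intro t _
    rw [if_neg (fun hc => h ⟨t, hc.symm⟩)]

lemma sT_apply (hd : 3 ≤ d) (i : ZMod (2 ^ (d - 1))) :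
    (sigma k d * Tsigma k d).coeff (Multiplicative.ofAdd i) = if 2 ∣ i.val then 0 else 1 := by
  classical
  haveI : NeZero (2 ^ (d - 1)) := ⟨pow_ne_zero _ two_ne_zero⟩
  have hn : 2 ^ (d - 1) = 2 * 2 ^ (d - 2) := by
    have h2 : d - 1 = (d - 2) + 1 := by omega
    rw [h2, pow_succ, mul_comm]
  have ha : i.val < 2 ^ (d - 1) := ZMod.val_lt i
  have hiv : ((i.val : ℕ) : ZMod (2 ^ (d - 1))) = i := ZMod.natCast_zmod_val i
  have key : ∀ t : ℕ, t < 2 ^ (d - 2) →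
      ((((2 * t + 1 : ℕ)) : ZMod (2 ^ (d - 1))) = i ↔ 2 * t + 1 = i.val) := by
    intro t ht
    constructor
    · intro h
      have h2 := congrArg ZMod.val h
      rwa [ZMod.val_cast_of_lt (by omega)] at h2
    · intro h
      rw [h]; exact hiv
  rw [sTv, MonoidAlgebra.coeff_sum, Finsupp.finset_sum_apply]
  have hsum : ∀ t ∈ Finset.range (2 ^ (d - 2)),
      (vv k d (2 * t + 1)).coeff (Multiplicative.ofAdd i) = if 2 * t + 1 = i.val then 1 else 0 := by
    intro t ht
    rw [vv_apply]
    exact if_congr (key t (Finset.mem_range.mp ht)) rfl rfl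
  rw [Finset.sum_congr rfl hsum]
  by_cases h : 2 ∣ i.val
  · rw [if_pos h, Finset.sum_eq_zero]
    intro t _
    rw [if_neg (by omega)]
  · have h1 : 1 ≤ i.val := by omega
    obtain ⟨t0, ht0⟩ : ∃ t0, 2 * t0 + 1 = i.val := ⟨(i.val - 1) / 2, by omega⟩
    rw [if_neg h, Finset.sum_eq_single t0]
    · rw [if_pos ht0]
    · intro t _ hne
      rw [if_neg (by omega)]
    · intro hc
      exact absurd (Finset.mem_range.mpr (by omega)) hc

lemma v2T (hd : 3 ≤ d) : vv k d 2 * Tsigma k d = Tsigma k d := by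
  have hn : 2 ^ (d - 1) = 2 * 2 ^ (d - 2) := by
    have h2 : d - 1 = (d - 2) + 1 := by omega
    rw [h2, pow_succ, mul_comm]
  rw [Tv, Finset.mul_sum]
  have h : ∀ t ∈ Finset.range (2 ^ (d - 2)), vv k d 2 * vv k d (2 * t) = vv k d (2 * (t + 1)) := by
    intro t _
    rw [vv_mul]; congr 1; ring
  rw [Finset.sum_congr rfl h]
  have e1 := Finset.sum_range_succ (fun t => vv k d (2 * t)) (2 ^ (d - 2))
  have e2 := Finset.sum_range_succ' (fun t => vv k d (2 * t)) (2 ^ (d - 2))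
  have hm : vv k d (2 * 2 ^ (d - 2)) = vv k d (2 * 0) := by
    have : 2 * 2 ^ (d - 2) = 2 ^ (d - 1) + 0 := by omega
    rw [this, vv_period]
  rw [e1] at e2
  have := e2.symm
  rw [hm] at this
  exact add_right_cancel this

lemma vjT (hd : 3 ≤ d) (j : ℕ) :
    vv k d j * Tsigma k d = if 2 ∣ j then Tsigma k d else sigma k d * Tsigma k d := by
  induction j with
  | zero => rw [vv_zero, one_mul, if_pos ⟨0, rfl⟩]
  | succ j ih =>
    have hstep : vv k d (j + 1) * Tsigma k d = vv k d 1 * (vv k d j * Tsigma k d) := by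
      rw [← mul_assoc, vv_mul]
      congr 2
      omega
    by_cases h : 2 ∣ j
    · rw [hstep, ih, if_pos h, if_neg (by omega), sigma_eq]
    · rw [hstep, ih, if_neg h, if_pos (by omega), sigma_eq, ← mul_assoc, vv_mul]
      show vv k d 2 * Tsigma k d = Tsigma k d
      exact v2T k d hd
lemma Tsigma_mem (hd : 3 ≤ d) : Tsigma k d ∈ fixedSubalgebra k d := by
  haveI : NeZero (2 ^ (d - 1)) := ⟨pow_ne_zero _ two_ne_zero⟩
  have hn : 2 ^ (d - 1) = 2 * 2 ^ (d - 2) := by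
    have h2 : d - 1 = (d - 2) + 1 := by omega
    rw [h2, pow_succ, mul_comm]
  rw [mem_fixed_iff]
  intro i
  rw [T_apply k d hd, T_apply k d hd]
  refine if_congr ?_ rfl rfl
  have hv := ZMod.neg_val i
  have hlt : i.val < 2 ^ (d - 1) := ZMod.val_lt i
  rw [hv]
  split
  · rename_i h; simp [h]
  · constructor <;> intro <;> omega

lemma sT_mem (hd : 3 ≤ d) : sigma k d * Tsigma k d ∈ fixedSubalgebra k d := by
  haveI : NeZero (2 ^ (d - 1)) := ⟨pow_ne_zero _ two_ne_zero⟩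
  have hn : 2 ^ (d - 1) = 2 * 2 ^ (d - 2) := by
    have h2 : d - 1 = (d - 2) + 1 := by omega
    rw [h2, pow_succ, mul_comm]
  rw [mem_fixed_iff]
  intro i
  rw [sT_apply k d hd, sT_apply k d hd]
  refine if_congr ?_ rfl rfl
  have hv := ZMod.neg_val i
  have hlt : i.val < 2 ^ (d - 1) := ZMod.val_lt i
  rw [hv]
  split
  · rename_i h; simp [h]
  · constructor <;> intro <;> omega

/-- `T(σ²)` as an element of the fixed subalgebra; junk value if `d < 3`. -/
noncomputable def Tel : fixedSubalgebra k d :=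
  if hd : 3 ≤ d then ⟨Tsigma k d, Tsigma_mem k d hd⟩ else 1

/-- `σT(σ²)` as an element of the fixed subalgebra; junk value if `d < 3`. -/
noncomputable def sTel : fixedSubalgebra k d :=
  if hd : 3 ≤ d then ⟨sigma k d * Tsigma k d, sT_mem k d hd⟩ else 1

lemma Tel_coe (hd : 3 ≤ d) : (Tel k d : MonoidAlgebra (WittVector 2 k) (cyclicZ d)) = Tsigma k d := by
  unfold Tel; rw [dif_pos hd]

lemma sTel_coe (hd : 3 ≤ d) :
    (sTel k d : MonoidAlgebra (WittVector 2 k) (cyclicZ d)) = sigma k d * Tsigma k d := by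
  unfold sTel; rw [dif_pos hd]

/-- The basis family, as elements of the fixed subalgebra; junk value out of range. -/
noncomputable def eps (c : ℕ) : fixedSubalgebra k d :=
  if hc : 3 ≤ d ∧ c ≤ 2 ^ (d - 2) then ⟨eA k d c, eA_mem k d hc.1 hc.2⟩ else 1

lemma eps_coe (hd : 3 ≤ d) {c : ℕ} (hc : c ≤ 2 ^ (d - 2)) :
    ((eps k d c : MonoidAlgebra (WittVector 2 k) (cyclicZ d))) = eA k d c := by
  unfold eps; rw [dif_pos ⟨hd, hc⟩]

lemma eps_decomp (hd : 3 ≤ d) (r : fixedSubalgebra k d) :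
    r = ∑ c ∈ Finset.range (2 ^ (d - 2) + 1),
        ((r : MonoidAlgebra (WittVector 2 k) (cyclicZ d)).coeff
          (Multiplicative.ofAdd ((c : ℕ) : ZMod (2 ^ (d - 1))))) • eps k d c := by
  refine Subtype.ext ?_
  rw [AddSubmonoidClass.coe_finset_sum]
  conv_lhs => rw [decomp k d hd (r : MonoidAlgebra (WittVector 2 k) (cyclicZ d)) r.2]
  refine Finset.sum_congr rfl fun c hc => ?_
  rw [SetLike.val_smul, eps_coe k d hd (by simp at hc; omega)]

lemma eA_mul_T (hd : 3 ≤ d) {c : ℕ} (hc : c ≤ 2 ^ (d - 2)) :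
    ∃ a b : WittVector 2 k,
      eA k d c * Tsigma k d = a • Tsigma k d + b • (sigma k d * Tsigma k d) ∧
      eA k d c * (sigma k d * Tsigma k d) = b • Tsigma k d + a • (sigma k d * Tsigma k d) := by
  have hn : 2 ^ (d - 1) = 2 * 2 ^ (d - 2) := by
    have h2 : d - 1 = (d - 2) + 1 := by omega
    rw [h2, pow_succ, mul_comm]
  have hs2 : sigma k d * (sigma k d * Tsigma k d) = Tsigma k d := by
    rw [← mul_assoc, sigma_eq, vv_mul]
    exact v2T k d hd
  suffices h : ∃ a b : WittVector 2 k,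
      eA k d c * Tsigma k d = a • Tsigma k d + b • (sigma k d * Tsigma k d) by
    obtain ⟨a, b, hab⟩ := h
    refine ⟨a, b, hab, ?_⟩
    have : eA k d c * (sigma k d * Tsigma k d) = sigma k d * (eA k d c * Tsigma k d) := by ring
    rw [this, hab, mul_add, mul_smul_comm, mul_smul_comm, hs2, add_comm]
  have hmdvd : 2 ∣ 2 ^ (d - 2) := dvd_pow_self 2 (by omega : d - 2 ≠ 0)
  unfold eA
  split
  · rename_i h
    refine ⟨1, 0, ?_⟩
    rw [vjT k d hd c, if_pos (by rcases h with rfl | rfl; exact ⟨0, rfl⟩; exact hmdvd)]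
    simp
  · unfold phiA
    rw [add_mul, vjT k d hd c, vjT k d hd (2 ^ (d - 1) - c)]
    rename_i h
    by_cases hpar : 2 ∣ c
    · refine ⟨2, 0, ?_⟩
      rw [if_pos hpar, if_pos (by omega), two_smul]
      simp
    · refine ⟨0, 2, ?_⟩
      rw [if_neg hpar, if_neg (by omega), two_smul]
      simp

lemma eps_mul_Tel (hd : 3 ≤ d) {c : ℕ} (hc : c ≤ 2 ^ (d - 2)) :
    eps k d c * Tel k d ∈ Submodule.span (WittVector 2 k) {Tel k d, sTel k d} ∧
    eps k d c * sTel k d ∈ Submodule.span (WittVector 2 k) {Tel k d, sTel k d} := by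
  obtain ⟨a, b, h1, h2⟩ := eA_mul_T k d hd hc
  constructor
  · rw [Submodule.mem_span_pair]
    refine ⟨a, b, ?_⟩
    refine Subtype.ext ?_
    push_cast [eps_coe k d hd hc, Tel_coe k d hd, sTel_coe k d hd]
    rw [← h1]
  · rw [Submodule.mem_span_pair]
    refine ⟨b, a, ?_⟩
    refine Subtype.ext ?_
    push_cast [eps_coe k d hd hc, Tel_coe k d hd, sTel_coe k d hd]
    rw [← h2]
lemma idealTT_eq (hd : 3 ≤ d) : idealTT k d = Ideal.span {Tel k d, sTel k d} := by
  unfold idealTT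
  congr 1
  ext x
  simp only [Set.mem_setOf_eq, Set.mem_insert_iff, Set.mem_singleton_iff]
  rw [← sTel_coe k d hd, ← Tel_coe k d hd, ← Subtype.ext_iff, ← Subtype.ext_iff]

lemma ideal_le_span (hd : 3 ≤ d) {x : fixedSubalgebra k d} (hx : x ∈ idealTT k d) :
    x ∈ Submodule.span (WittVector 2 k) {Tel k d, sTel k d} := by
  rw [idealTT_eq k d hd, Ideal.mem_span_pair] at hx
  obtain ⟨a, b, hab⟩ := hx
  rw [← hab]
  have key : ∀ (r : fixedSubalgebra k d) (z : fixedSubalgebra k d),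
      (∀ c : ℕ, c ≤ 2 ^ (d - 2) →
        eps k d c * z ∈ Submodule.span (WittVector 2 k) {Tel k d, sTel k d}) →
      r * z ∈ Submodule.span (WittVector 2 k) {Tel k d, sTel k d} := by
    intro r z hz
    have hr := eps_decomp k d hd r
    rw [hr, Finset.sum_mul]
    refine Submodule.sum_mem _ fun c hc => ?_
    rw [smul_mul_assoc]
    exact Submodule.smul_mem _ _ (hz c (by simp at hc; omega))
  exact add_mem
    (key a (Tel k d) (fun c hc => (eps_mul_Tel k d hd hc).1))
    (key b (sTel k d) (fun c hc => (eps_mul_Tel k d hd hc).2))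

lemma Tel_decomp (hd : 3 ≤ d) :
    Tel k d = ∑ c ∈ Finset.range (2 ^ (d - 2) + 1),
      (if 2 ∣ c then (1 : WittVector 2 k) else 0) • eps k d c := by
  have hn : 2 ^ (d - 1) = 2 * 2 ^ (d - 2) := by
    have h2 : d - 1 = (d - 2) + 1 := by omega
    rw [h2, pow_succ, mul_comm]
  conv_lhs => rw [eps_decomp k d hd (Tel k d)]
  refine Finset.sum_congr rfl fun c hc => ?_
  congr 1
  rw [Tel_coe k d hd, T_apply k d hd]
  refine if_congr ?_ rfl rfl
  have hm : 1 ≤ 2 ^ (d - 2) := Nat.one_le_two_pow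
  rw [ZMod.val_cast_of_lt (by simp at hc; omega)]

lemma sTel_decomp (hd : 3 ≤ d) :
    sTel k d = ∑ c ∈ Finset.range (2 ^ (d - 2) + 1),
      (if 2 ∣ c then (0 : WittVector 2 k) else 1) • eps k d c := by
  have hn : 2 ^ (d - 1) = 2 * 2 ^ (d - 2) := by
    have h2 : d - 1 = (d - 2) + 1 := by omega
    rw [h2, pow_succ, mul_comm]
  conv_lhs => rw [eps_decomp k d hd (sTel k d)]
  refine Finset.sum_congr rfl fun c hc => ?_
  congr 1
  rw [sTel_coe k d hd, sT_apply k d hd]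
  refine if_congr ?_ rfl rfl
  have hm : 1 ≤ 2 ^ (d - 2) := Nat.one_le_two_pow
  rw [ZMod.val_cast_of_lt (by simp at hc; omega)]

lemma sum_range_split {M : Type*} [AddCommMonoid M] (f : ℕ → M) {m : ℕ} (hm : 2 ≤ m) :
    ∑ c ∈ Finset.range (m + 1), f c = f 0 + f 1 + ∑ j ∈ Finset.range (m - 1), f (j + 2) := by
  rw [Finset.sum_range_succ']
  have hm1 : m = (m - 1) + 1 := by omega
  rw [hm1, Finset.sum_range_succ' (fun c => f (c + 1)) (m - 1)]
  simp only [add_assoc]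
  norm_num
  abel

/-- The image of `eps c` in the quotient. -/
noncomputable def qq (c : ℕ) : fixedSubalgebra k d ⧸ idealTT k d :=
  Ideal.Quotient.mkₐ (WittVector 2 k) (idealTT k d) (eps k d c)

lemma mk_Tel (hd : 3 ≤ d) :
    Ideal.Quotient.mkₐ (WittVector 2 k) (idealTT k d) (Tel k d) = 0 := by
  rw [Ideal.Quotient.mkₐ_eq_mk, Ideal.Quotient.eq_zero_iff_mem, idealTT_eq k d hd]
  exact Ideal.subset_span (Set.mem_insert _ _)

lemma mk_sTel (hd : 3 ≤ d) :
    Ideal.Quotient.mkₐ (WittVector 2 k) (idealTT k d) (sTel k d) = 0 := by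
  rw [Ideal.Quotient.mkₐ_eq_mk, Ideal.Quotient.eq_zero_iff_mem, idealTT_eq k d hd]
  exact Ideal.subset_span (Set.mem_insert_of_mem _ rfl)

lemma qq_relation_T (hd : 3 ≤ d) :
    ∑ c ∈ Finset.range (2 ^ (d - 2) + 1),
      (if 2 ∣ c then (1 : WittVector 2 k) else 0) • qq k d c = 0 := by
  have h := congrArg (Ideal.Quotient.mkₐ (WittVector 2 k) (idealTT k d)) (Tel_decomp k d hd)
  rw [mk_Tel k d hd, map_sum] at h
  simp only [map_smul] at h
  exact h.symm

lemma qq_relation_sT (hd : 3 ≤ d) :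
    ∑ c ∈ Finset.range (2 ^ (d - 2) + 1),
      (if 2 ∣ c then (0 : WittVector 2 k) else 1) • qq k d c = 0 := by
  have h := congrArg (Ideal.Quotient.mkₐ (WittVector 2 k) (idealTT k d)) (sTel_decomp k d hd)
  rw [mk_sTel k d hd, map_sum] at h
  simp only [map_smul] at h
  exact h.symm
lemma bfam_indep (hd : 3 ≤ d) :
    LinearIndependent (WittVector 2 k)
      (fun j : Fin (2 ^ (d - 2) - 1) => qq k d (j.val + 2)) := by
  classical
  haveI : NeZero (2 ^ (d - 1)) := ⟨pow_ne_zero _ two_ne_zero⟩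
  have hn : 2 ^ (d - 1) = 2 * 2 ^ (d - 2) := by
    have h2 : d - 1 = (d - 2) + 1 := by omega
    rw [h2, pow_succ, mul_comm]
  have hm2 : 2 ≤ 2 ^ (d - 2) := by
    calc 2 = 2 ^ 1 := rfl
    _ ≤ 2 ^ (d - 2) := Nat.pow_le_pow_right (by norm_num) (by omega)
  rw [Fintype.linearIndependent_iff]
  intro g hg j0
  have hjb : ∀ j : Fin (2 ^ (d - 2) - 1), j.val + 2 ≤ 2 ^ (d - 2) := fun j => by
    have := j.isLt; omega
  have hmk : Ideal.Quotient.mkₐ (WittVector 2 k) (idealTT k d)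
      (∑ j : Fin (2 ^ (d - 2) - 1), g j • eps k d (j.val + 2)) = 0 := by
    rw [map_sum]
    simp only [map_smul]
    exact hg
  rw [Ideal.Quotient.mkₐ_eq_mk, Ideal.Quotient.eq_zero_iff_mem] at hmk
  obtain ⟨a, b, hab⟩ := Submodule.mem_span_pair.mp (ideal_le_span k d hd hmk)
  have hA : a • Tsigma k d + b • (sigma k d * Tsigma k d) =
      ∑ j : Fin (2 ^ (d - 2) - 1), g j • eA k d (j.val + 2) := by
    have h1 := congrArg Subtype.val hab
    rw [Subalgebra.coe_add, SetLike.val_smul, SetLike.val_smul, Tel_coe k d hd,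
      sTel_coe k d hd, AddSubmonoidClass.coe_finset_sum] at h1
    rw [h1]
    exact Finset.sum_congr rfl fun j _ => by
      rw [SetLike.val_smul, eps_coe k d hd (hjb j)]
  have heval : ∀ c' : ℕ, c' ≤ 2 ^ (d - 2) →
      a * (if 2 ∣ c' then 1 else 0) + b * (if 2 ∣ c' then 0 else 1) =
      ∑ j : Fin (2 ^ (d - 2) - 1), g j * (if j.val + 2 = c' then 1 else 0) := by
    intro c' hc'
    have h2 := congrArg
      (fun z : MonoidAlgebra (WittVector 2 k) (cyclicZ d) =>
        z.coeff (Multiplicative.ofAdd ((c' : ℕ) : ZMod (2 ^ (d - 1))))) hA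
    rw [MonoidAlgebra.coeff_add, Finsupp.add_apply, MonoidAlgebra.coeff_smul_apply,
      MonoidAlgebra.coeff_smul_apply, MonoidAlgebra.coeff_sum,
      Finsupp.finset_sum_apply] at h2
    rw [T_apply k d hd, sT_apply k d hd, ZMod.val_cast_of_lt (by omega)] at h2
    rw [smul_eq_mul, smul_eq_mul] at h2
    rw [h2]
    exact Finset.sum_congr rfl fun j _ => by
      rw [MonoidAlgebra.coeff_smul_apply, smul_eq_mul, eA_apply k d hd (hjb j) hc']
  have ha0 : a = 0 := by
    have h0 := heval 0 (by omega)
    simpa using h0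
  have hb0 : b = 0 := by
    have h1 := heval 1 (by omega)
    simpa using h1
  have h3 := heval (j0.val + 2) (hjb j0)
  rw [ha0, hb0, Finset.sum_eq_single j0] at h3
  · rw [if_pos rfl, mul_one] at h3
    simpa using h3.symm
  · intro j _ hne
    rw [if_neg (fun hc => hne (Fin.ext (by omega))), mul_zero]
  · intro hj0
    exact absurd (Finset.mem_univ j0) hj0

lemma qq_mem_span (hd : 3 ≤ d) {c : ℕ} (hc : c ≤ 2 ^ (d - 2)) :
    qq k d c ∈ Submodule.span (WittVector 2 k)
      (Set.range (fun j : Fin (2 ^ (d - 2) - 1) => qq k d (j.val + 2))) := by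
  have hm2 : 2 ≤ 2 ^ (d - 2) := by
    calc 2 = 2 ^ 1 := rfl
    _ ≤ 2 ^ (d - 2) := Nat.pow_le_pow_right (by norm_num) (by omega)
  have hmem : ∀ j : ℕ, j < 2 ^ (d - 2) - 1 →
      qq k d (j + 2) ∈ Submodule.span (WittVector 2 k)
        (Set.range (fun j : Fin (2 ^ (d - 2) - 1) => qq k d (j.val + 2))) := by
    intro j hj
    exact Submodule.subset_span ⟨⟨j, hj⟩, rfl⟩
  rcases Nat.lt_or_ge c 2 with hc2 | hc2
  · interval_cases c
    · -- c = 0 : use the T relation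
      have hrel := qq_relation_T k d hd
      rw [sum_range_split _ hm2] at hrel
      have e0 : (if 2 ∣ 0 then (1 : WittVector 2 k) else 0) • qq k d 0 = qq k d 0 := by
        rw [if_pos ⟨0, rfl⟩, one_smul]
      have e1 : (if 2 ∣ 1 then (1 : WittVector 2 k) else 0) • qq k d 1 = 0 := by
        rw [if_neg (by omega), zero_smul]
      rw [e0, e1, add_zero] at hrel
      have : qq k d 0 = -∑ j ∈ Finset.range (2 ^ (d - 2) - 1),
          (if 2 ∣ (j + 2) then (1 : WittVector 2 k) else 0) • qq k d (j + 2) :=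
        eq_neg_of_add_eq_zero_left hrel
      rw [this]
      exact neg_mem (Submodule.sum_mem _ fun j hj =>
        Submodule.smul_mem _ _ (hmem j (Finset.mem_range.mp hj)))
    · -- c = 1 : use the σT relation
      have hrel := qq_relation_sT k d hd
      rw [sum_range_split _ hm2] at hrel
      have e0 : (if 2 ∣ 0 then (0 : WittVector 2 k) else 1) • qq k d 0 = 0 := by
        rw [if_pos ⟨0, rfl⟩, zero_smul]
      have e1 : (if 2 ∣ 1 then (0 : WittVector 2 k) else 1) • qq k d 1 = qq k d 1 := by
        rw [if_neg (by omega), one_smul]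
      rw [e0, e1, zero_add] at hrel
      have : qq k d 1 = -∑ j ∈ Finset.range (2 ^ (d - 2) - 1),
          (if 2 ∣ (j + 2) then (0 : WittVector 2 k) else 1) • qq k d (j + 2) :=
        eq_neg_of_add_eq_zero_left hrel
      rw [this]
      exact neg_mem (Submodule.sum_mem _ fun j hj =>
        Submodule.smul_mem _ _ (hmem j (Finset.mem_range.mp hj)))
  · have : c = (c - 2) + 2 := by omega
    rw [this]
    exact hmem (c - 2) (by omega)

lemma bfam_span (hd : 3 ≤ d) :
    ⊤ ≤ Submodule.span (WittVector 2 k)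
      (Set.range (fun j : Fin (2 ^ (d - 2) - 1) => qq k d (j.val + 2))) := by
  intro y _
  obtain ⟨r, rfl⟩ := Ideal.Quotient.mkₐ_surjective (WittVector 2 k) (idealTT k d) y
  rw [eps_decomp k d hd r, map_sum]
  simp only [map_smul]
  exact Submodule.sum_mem _ fun c hc =>
    Submodule.smul_mem _ _ (qq_mem_span k d hd (by simp at hc; omega))

/-- The basis of the quotient. -/
noncomputable def quotBasis (hd : 3 ≤ d) :
    Module.Basis (Fin (2 ^ (d - 2) - 1)) (WittVector 2 k) (fixedSubalgebra k d ⧸ idealTT k d) :=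
  Module.Basis.mk (bfam_indep k d hd) (bfam_span k d hd)
/-- `σ^c + σ^{-c}` as an element of the fixed subalgebra; junk value out of range. -/
noncomputable def phiEl (c : ℕ) : fixedSubalgebra k d :=
  if hc : c ≤ 2 ^ (d - 1) then ⟨phiA k d c, phiA_mem k d hc⟩ else 1

lemma phiEl_coe {c : ℕ} (hc : c ≤ 2 ^ (d - 1)) :
    ((phiEl k d c : MonoidAlgebra (WittVector 2 k) (cyclicZ d))) = phiA k d c := by
  unfold phiEl; rw [dif_pos hc]

lemma phiA_rec {c : ℕ} (hc : c + 2 ≤ 2 ^ (d - 1)) :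
    phiA k d 1 * phiA k d (c + 1) = phiA k d (c + 2) + phiA k d c := by
  unfold phiA
  rw [add_mul, mul_add, mul_add, vv_mul, vv_mul, vv_mul, vv_mul]
  have e1 : 1 + (c + 1) = c + 2 := by omega
  have e2 : 1 + (2 ^ (d - 1) - (c + 1)) = 2 ^ (d - 1) - c := by omega
  have e3 : (2 ^ (d - 1) - 1) + (c + 1) = 2 ^ (d - 1) + c := by omega
  have e4 : (2 ^ (d - 1) - 1) + (2 ^ (d - 1) - (c + 1)) =
      2 ^ (d - 1) + (2 ^ (d - 1) - (c + 2)) := by omega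
  rw [e1, e2, e3, e4, vv_period, vv_period]
  abel

lemma phiEl_rec {c : ℕ} (hc : c + 2 ≤ 2 ^ (d - 1)) :
    phiEl k d 1 * phiEl k d (c + 1) = phiEl k d (c + 2) + phiEl k d c := by
  refine Subtype.ext ?_
  rw [Subalgebra.coe_mul, Subalgebra.coe_add, phiEl_coe k d (by omega),
    phiEl_coe k d (by omega), phiEl_coe k d (by omega), phiEl_coe k d (by omega)]
  exact phiA_rec k d hc

lemma phiEl_zero : phiEl k d 0 = 1 + 1 := by
  refine Subtype.ext ?_
  rw [Subalgebra.coe_add, Subalgebra.coe_one, phiEl_coe k d (Nat.zero_le _)]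
  unfold phiA
  rw [vv_zero]
  have h0 : 2 ^ (d - 1) - 0 = 2 ^ (d - 1) + 0 := by
    rw [Nat.sub_zero, Nat.add_zero]
  rw [h0, vv_period, vv_zero]

lemma phiEl_eq_eps (hd : 3 ≤ d) {c : ℕ} (hc1 : 1 ≤ c) (hc : c ≤ 2 ^ (d - 2) - 1) :
    phiEl k d c = eps k d c := by
  have hn : 2 ^ (d - 1) = 2 * 2 ^ (d - 2) := by
    have h2 : d - 1 = (d - 2) + 1 := by omega
    rw [h2, pow_succ, mul_comm]
  have hm2 : 2 ≤ 2 ^ (d - 2) := by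
    calc 2 = 2 ^ 1 := rfl
    _ ≤ 2 ^ (d - 2) := Nat.pow_le_pow_right (by norm_num) (by omega)
  refine Subtype.ext ?_
  rw [phiEl_coe k d (by omega), eps_coe k d hd (by omega)]
  unfold eA
  rw [if_neg (by omega)]

lemma eps_zero : eps k d 0 = 1 := by
  refine Subtype.ext ?_
  rw [Subalgebra.coe_one]
  unfold eps
  split
  · show eA k d 0 = 1
    unfold eA
    rw [if_pos (Or.inl rfl)]
    exact vv_zero k d
  · rfl

lemma chain (hd : 3 ≤ d) (c : ℕ) (hc : c + 1 ≤ 2 ^ (d - 2)) :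
    Ideal.Quotient.mkₐ (WittVector 2 k) (idealTT k d) (phiEl k d c) ∈
      Algebra.adjoin (WittVector 2 k) {qq k d 1} ∧
    Ideal.Quotient.mkₐ (WittVector 2 k) (idealTT k d) (phiEl k d (c + 1)) ∈
      Algebra.adjoin (WittVector 2 k) {qq k d 1} := by
  have hn : 2 ^ (d - 1) = 2 * 2 ^ (d - 2) := by
    have h2 : d - 1 = (d - 2) + 1 := by omega
    rw [h2, pow_succ, mul_comm]
  have hm2 : 2 ≤ 2 ^ (d - 2) := by
    calc 2 = 2 ^ 1 := rfl
    _ ≤ 2 ^ (d - 2) := Nat.pow_le_pow_right (by norm_num) (by omega)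
  have h1 : Ideal.Quotient.mkₐ (WittVector 2 k) (idealTT k d) (phiEl k d 1) ∈
      Algebra.adjoin (WittVector 2 k) {qq k d 1} := by
    rw [phiEl_eq_eps k d hd (by omega) (by omega)]
    exact Algebra.subset_adjoin rfl
  induction c with
  | zero =>
    refine ⟨?_, h1⟩
    rw [phiEl_zero, map_add, map_one]
    exact add_mem (one_mem _) (one_mem _)
  | succ c ih =>
    obtain ⟨hc0, hc1⟩ := ih (by omega)
    refine ⟨hc1, ?_⟩
    have hrec := congrArg (Ideal.Quotient.mkₐ (WittVector 2 k) (idealTT k d))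
      (phiEl_rec k d (show c + 2 ≤ 2 ^ (d - 1) by omega))
    rw [map_mul, map_add] at hrec
    have heq := eq_sub_of_add_eq hrec.symm
    rw [heq]
    exact sub_mem (mul_mem h1 hc1) hc0

lemma qq_mem_adjoin_lt (hd : 3 ≤ d) {c : ℕ} (hc : c ≤ 2 ^ (d - 2) - 1) :
    qq k d c ∈ Algebra.adjoin (WittVector 2 k) {qq k d 1} := by
  have hm2 : 2 ≤ 2 ^ (d - 2) := by
    calc 2 = 2 ^ 1 := rfl
    _ ≤ 2 ^ (d - 2) := Nat.pow_le_pow_right (by norm_num) (by omega)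
  rcases Nat.eq_zero_or_pos c with rfl | hc1
  · unfold qq
    rw [eps_zero, map_one]
    exact one_mem _
  · unfold qq
    rw [← phiEl_eq_eps k d hd hc1 hc]
    rcases Nat.eq_zero_or_pos c with rfl | hcp
    · omega
    · have hc' : (c - 1) + 1 ≤ 2 ^ (d - 2) := by omega
      have := (chain k d hd (c - 1) hc').2
      have hcc : c - 1 + 1 = c := by omega
      rwa [hcc] at this

lemma qq_mem_adjoin (hd : 3 ≤ d) {c : ℕ} (hc : c ≤ 2 ^ (d - 2)) :
    qq k d c ∈ Algebra.adjoin (WittVector 2 k) {qq k d 1} := by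
  have hm2 : 2 ≤ 2 ^ (d - 2) := by
    calc 2 = 2 ^ 1 := rfl
    _ ≤ 2 ^ (d - 2) := Nat.pow_le_pow_right (by norm_num) (by omega)
  rcases Nat.lt_or_ge c (2 ^ (d - 2)) with hlt | hge
  · exact qq_mem_adjoin_lt k d hd (by omega)
  · have hcm : c = 2 ^ (d - 2) := by omega
    subst hcm
    have hrel := qq_relation_T k d hd
    rw [Finset.sum_range_succ] at hrel
    have hind : (if 2 ∣ 2 ^ (d - 2) then (1 : WittVector 2 k) else 0) = 1 :=
      if_pos (dvd_pow_self 2 (by omega : d - 2 ≠ 0))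
    rw [hind, one_smul] at hrel
    have heq := eq_neg_of_add_eq_zero_right hrel
    rw [heq]
    exact neg_mem (Subalgebra.sum_mem _ fun c hc =>
      Subalgebra.smul_mem _ (qq_mem_adjoin_lt k d hd (by simp at hc; omega)) _)

lemma adjoin_qq_one_eq_top (hd : 3 ≤ d) :
    Algebra.adjoin (WittVector 2 k) {qq k d 1} = ⊤ := by
  rw [eq_top_iff]
  intro y _
  obtain ⟨r, rfl⟩ := Ideal.Quotient.mkₐ_surjective (WittVector 2 k) (idealTT k d) y
  rw [eps_decomp k d hd r, map_sum]
  simp only [map_smul]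
  exact Subalgebra.sum_mem _ fun c hc =>
    Subalgebra.smul_mem _ (qq_mem_adjoin k d hd (by simp at hc; omega)) _

lemma sigma_add_inv (hd : 3 ≤ d) : sigma k d + sigmaInv k d = eA k d 1 := by
  have hm2 : 2 ≤ 2 ^ (d - 2) := by
    calc 2 = 2 ^ 1 := rfl
    _ ≤ 2 ^ (d - 2) := Nat.pow_le_pow_right (by norm_num) (by omega)
  unfold eA
  rw [if_neg (by omega)]
  unfold phiA
  have hinv : sigmaInv k d = vv k d (2 ^ (d - 1) - 1) := by
    unfold sigmaInv vv
    congr 1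
    have h1 : ((2 ^ (d - 1) - 1 : ℕ) : ZMod (2 ^ (d - 1))) = (-1 : ZMod (2 ^ (d - 1))) := by
      rw [← neg_natCast d Nat.one_le_two_pow, Nat.cast_one]
    rw [h1]
  rw [hinv, sigma_eq]

end Aux16

/-- For `k` algebraically closed of characteristic `2`, `W = W(k)`, `d ≥ 3`,
and `Z` cyclic of order `2^(d-1)`, the quotient `S' = (WZ)^τ/(T(σ²), σT(σ²))` is a free
`W`-module of rank `2^(d-2) − 1`, and `S'` is generated as a `W`-algebra by the residue class
of `σ + σ⁻¹`. -/
theorem quotient_fixedSubalgebra_TT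
    {k : Type*} [Field k] [IsAlgClosed k] [CharP k 2] (d : ℕ) (hd : 3 ≤ d) :
    Nonempty (Module.Basis (Fin (2 ^ (d - 2) - 1)) (WittVector 2 k)
        (fixedSubalgebra k d ⧸ idealTT k d)) ∧
    ∀ x : fixedSubalgebra k d,
      (x : MonoidAlgebra (WittVector 2 k) (cyclicZ d)) = sigma k d + sigmaInv k d →
        Algebra.adjoin (WittVector 2 k) {Ideal.Quotient.mk (idealTT k d) x} = ⊤ := by
  constructor
  · exact ⟨quotBasis k d hd⟩
  · intro x hx
    have hx1 : x = eps k d 1 := by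
      refine Subtype.ext ?_
      rw [hx, sigma_add_inv k d hd, ← eps_coe k d hd Nat.one_le_two_pow]
    rw [hx1]
    have hqq : Ideal.Quotient.mk (idealTT k d) (eps k d 1) = qq k d 1 := by
      unfold qq
      rw [Ideal.Quotient.mkₐ_eq_mk]
    rw [hqq]
    exact adjoin_qq_one_eq_top k d hd
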